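/- Define d(a, r) = Σ_{i=1}^n r_i (a_i + a_{i−1} − r_{i−1} − r_i) for vectors a = (a_0, ..., a_n) and r = (r_1, ..., r_n) of nonnegative integers, with r_0 = r_{n+1} = 0. Suppose r and the vector r' obtained from r by increasing the i-th entry by 1 both satisfy the feasibility constraints r_j + r_{j+1} ≤ a_j for all j = 0, ..., n. Then d(a, r') ≥ d(a, r) + 1, i.e., d is strictly increasing in each rank coordinate within the feasible region. -/

import Mathlib

open Finset

/-- Monotonicity Lemma: the dimension
`d(a, r) = ∑_{i=1}^n r i * (a i + a (i-1) - r (i-1) - r i)` (conventions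
`r 0 = r (n+1) = 0`) strictly increases (by at least 1) when a single rank `r i`
(`1 ≤ i ≤ n`) is increased by 1, provided both rank vectors satisfy the
feasibility constraints `r j + r (j+1) ≤ a j` for all `j ≤ n`. -/
theorem stmt3 (n : ℕ) (a r : ℕ → ℕ) (i : ℕ) (hi1 : 1 ≤ i) (hin : i ≤ n)
    (hr0 : r 0 = 0) (hrn : r (n + 1) = 0)
    (r' : ℕ → ℕ) (hr' : r' = Function.update r i (r i + 1))
    (hfeas : ∀ j ≤ n, r j + r (j + 1) ≤ a j)
    (hfeas' : ∀ j ≤ n, r' j + r' (j + 1) ≤ a j) :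
    (∑ k ∈ Icc 1 n, (r k : ℤ) * ((a k : ℤ) + a (k - 1) - r (k - 1) - r k)) + 1 ≤
      ∑ k ∈ Icc 1 n, (r' k : ℤ) * ((a k : ℤ) + a (k - 1) - r' (k - 1) - r' k) := by
  have him1 : i - 1 + 1 = i := Nat.sub_add_cancel hi1
  have hrr'1 : r' i = r i + 1 := by rw [hr']; simp
  have hrr'ne : ∀ k, k ≠ i → r' k = r k := fun k hk => by
    rw [hr', Function.update_of_ne hk]
  -- feasibility consequences
  have hA : (r (i - 1) : ℤ) + r i + 1 ≤ a (i - 1) := by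
    have h := hfeas' (i - 1) (le_trans (Nat.sub_le i 1) hin)
    rw [him1, hrr'1, hrr'ne (i - 1) (by omega)] at h
    omega
  have hB : (r i : ℤ) + 1 + r (i + 1) ≤ a i := by
    have h := hfeas' i hin
    rw [hrr'1, hrr'ne (i + 1) (by omega)] at h
    omega
  set h : ℕ → ℤ := fun k => (r' k : ℤ) * ((a k : ℤ) + a (k - 1) - r' (k - 1) - r' k)
      - (r k : ℤ) * ((a k : ℤ) + a (k - 1) - r (k - 1) - r k) with hh
  have hsum : ∑ k ∈ Icc 1 n, h k =
      (∑ k ∈ Icc 1 n, (r' k : ℤ) * ((a k : ℤ) + a (k - 1) - r' (k - 1) - r' k))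
      - ∑ k ∈ Icc 1 n, (r k : ℤ) * ((a k : ℤ) + a (k - 1) - r (k - 1) - r k) :=
    Finset.sum_sub_distrib _ _
  have hzero : ∀ k ∈ Icc 1 n, k ≠ i → k ≠ i + 1 → h k = 0 := by
    intro k hk hki hki1
    have hk1 : 1 ≤ k := (Finset.mem_Icc.mp hk).1
    have h1 : r' k = r k := hrr'ne k hki
    have h2 : r' (k - 1) = r (k - 1) := hrr'ne (k - 1) (by omega)
    simp [hh, h1, h2]
  have hhi : h i = (a i : ℤ) + a (i - 1) - r (i - 1) - 2 * r i - 1 := by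
    have h2 : r' (i - 1) = r (i - 1) := hrr'ne (i - 1) (by omega)
    simp only [hh, hrr'1, h2]
    push_cast
    ring
  have himem : i ∈ Icc 1 n := Finset.mem_Icc.mpr ⟨hi1, hin⟩
  rcases eq_or_lt_of_le hin with hieq | hilt
  · -- i = n
    have hsplit : ∑ k ∈ Icc 1 n, h k = h i + ∑ k ∈ (Icc 1 n).erase i, h k :=
      (Finset.add_sum_erase _ h himem).symm
    have hrest : ∑ k ∈ (Icc 1 n).erase i, h k = 0 :=
      Finset.sum_eq_zero (fun k hk => by
        obtain ⟨hk1, hk2⟩ := Finset.mem_erase.mp hk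
        refine hzero k hk2 hk1 ?_
        have := (Finset.mem_Icc.mp hk2).2
        omega)
    have hpos : (0 : ℤ) ≤ r (i + 1) := Nat.cast_nonneg _
    linarith [hsum, hsplit, hrest, hhi]
  · -- i < n
    have hi1mem : i + 1 ∈ (Icc 1 n).erase i := by
      refine Finset.mem_erase.mpr ⟨by omega, Finset.mem_Icc.mpr ⟨by omega, by omega⟩⟩
    have hsplit : ∑ k ∈ Icc 1 n, h k = h i + ∑ k ∈ (Icc 1 n).erase i, h k :=
      (Finset.add_sum_erase _ h himem).symm
    have hsplit2 : ∑ k ∈ (Icc 1 n).erase i, h k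
        = h (i + 1) + ∑ k ∈ ((Icc 1 n).erase i).erase (i + 1), h k :=
      (Finset.add_sum_erase _ h hi1mem).symm
    have hrest : ∑ k ∈ ((Icc 1 n).erase i).erase (i + 1), h k = 0 :=
      Finset.sum_eq_zero (fun k hk => by
        obtain ⟨hk1, hk2⟩ := Finset.mem_erase.mp hk
        obtain ⟨hk3, hk4⟩ := Finset.mem_erase.mp hk2
        exact hzero k hk4 hk3 hk1)
    have hhi1 : h (i + 1) = -(r (i + 1) : ℤ) := by
      have h1 : r' (i + 1) = r (i + 1) := hrr'ne _ (by omega)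
      have h2 : i + 1 - 1 = i := by omega
      simp only [hh, h1, h2, hrr'1]
      push_cast
      ring
    linarith [hsum, hsplit, hsplit2, hrest, hhi, hhi1]
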